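/- Let (X,p) be a TVS-cone metric space over E with cone P, equipped with the cone metric topology τ_p. A subset A ⊆ X is closed in τ_p if and only if A is sequentially closed, i.e., whenever a sequence (x_n) with all x_n ∈ A cone-converges to some x ∈ X, then x ∈ A. -/

import Mathlib

open Filter Topology

section Defs

variable {E : Type*} [AddCommGroup E] [Module ℝ E] [TopologicalSpace E]

/-- `P` is a closed, pointed convex cone with nonempty interior in the TVS `E`. -/
structure IsTVSCone (P : Set E) : Prop where
  add_mem : ∀ ⦃a⦄, a ∈ P → ∀ ⦃b⦄, b ∈ P → a + b ∈ P
  smul_mem : ∀ (r : ℝ), 0 ≤ r → ∀ ⦃a⦄, a ∈ P → r • a ∈ P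
  pointed : ∀ a, a ∈ P → -a ∈ P → a = 0
  isClosed : IsClosed P
  int_nonempty : (interior P).Nonempty

/-- `a ≤ b` with respect to the cone `P`. -/
def ConeLe (P : Set E) (a b : E) : Prop := b - a ∈ P

/-- `a ≪ b` with respect to the cone `P`. -/
def ConeLt (P : Set E) (a b : E) : Prop := b - a ∈ interior P

/-- `p : X × X → E` is a TVS-cone metric over the cone `P`. -/
structure IsConeMetric (P : Set E) {X : Type*} (p : X → X → E) : Prop where
  nonneg : ∀ x y, ConeLe P 0 (p x y)
  eq_zero_iff : ∀ x y, p x y = 0 ↔ x = y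
  symm : ∀ x y, p x y = p y x
  triangle : ∀ x y z, ConeLe P (p x y) (p x z + p z y)

/-- The sequence `x` cone-converges to `a`. -/
def ConeConverges (P : Set E) {X : Type*} (p : X → X → E) (x : ℕ → X) (a : X) : Prop :=
  ∀ c, c ∈ interior P → ∃ N, ∀ n ≥ N, ConeLt P (p (x n) a) c

/-- The sequence `x` is cone-Cauchy. -/
def ConeCauchy (P : Set E) {X : Type*} (p : X → X → E) (x : ℕ → X) : Prop :=
  ∀ c, c ∈ interior P → ∃ N, ∀ n ≥ N, ∀ m ≥ N, ConeLt P (p (x n) (x m)) c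

/-- `(X, p)` is cone-complete. -/
def ConeComplete (P : Set E) {X : Type*} (p : X → X → E) : Prop :=
  ∀ x : ℕ → X, ConeCauchy P p x → ∃ a, ConeConverges P p x a

/-- The nonlinear scalarization ξ_e(y) = inf {t : t • e - y ∈ P}. -/
noncomputable def xiScal (P : Set E) (e y : E) : ℝ := sInf {t : ℝ | t • e - y ∈ P}

/-- The open ball `B(x, c) = {y : p x y ≪ c}`. -/
def coneBall (P : Set E) {X : Type*} (p : X → X → E) (x : X) (c : E) : Set X :=
  {y | ConeLt P (p x y) c}

/-- The cone metric topology `τ_p`, generated by the balls `B(x,c)`, `c ≫ 0`. -/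
def coneTopology (P : Set E) {X : Type*} (p : X → X → E) : TopologicalSpace X :=
  TopologicalSpace.generateFrom {s | ∃ x c, c ∈ interior P ∧ s = coneBall P p x c}

end Defs

section Aux

variable {E : Type*} [AddCommGroup E] [Module ℝ E] [TopologicalSpace E]
  [IsTopologicalAddGroup E] [ContinuousSMul ℝ E] {P : Set E}

lemma intP_add_P (hP : IsTVSCone P) {a b : E} (ha : a ∈ interior P) (hb : b ∈ P) :
    a + b ∈ interior P := by
  have hopen : IsOpen ((· + b) '' interior P) :=
    (isOpenMap_add_right b) _ isOpen_interior
  have hsub : (· + b) '' interior P ⊆ P := by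
    rintro _ ⟨x, hx, rfl⟩
    exact hP.add_mem (interior_subset hx) hb
  exact interior_maximal hsub hopen ⟨a, ha, rfl⟩

lemma smul_intP (hP : IsTVSCone P) {t : ℝ} (ht : 0 < t) {c : E} (hc : c ∈ interior P) :
    t • c ∈ interior P := by
  have hopen : IsOpen ((t • ·) '' interior P) :=
    (isOpenMap_smul₀ (G₀ := ℝ) ht.ne') _ isOpen_interior
  have hsub : (t • ·) '' interior P ⊆ P := by
    rintro _ ⟨x, hx, rfl⟩
    exact hP.smul_mem t ht.le (interior_subset hx)
  exact interior_maximal hsub hopen ⟨c, hc, rfl⟩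

lemma small_smul (hP : IsTVSCone P) {c e : E} (hc : c ∈ interior P) :
    ∃ t : ℝ, 0 < t ∧ c - t • e ∈ interior P := by
  have hcont : ContinuousAt (fun t : ℝ => c - t • e) 0 := by fun_prop
  have h0 : (fun t : ℝ => c - t • e) 0 ∈ interior P := by simpa using hc
  have hev := hcont.preimage_mem_nhds (isOpen_interior.mem_nhds h0)
  rcases Metric.mem_nhds_iff.1 hev with ⟨δ, hδ, hball⟩
  refine ⟨δ / 2, by linarith, ?_⟩
  have : (δ / 2 : ℝ) ∈ Metric.ball (0 : ℝ) δ := by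
    simp only [Metric.mem_ball, Real.dist_eq, sub_zero]
    rw [abs_of_pos (by linarith)]; linarith
  exact hball this

/-- Every open set in the cone topology contains a ball around each of its points. -/
lemma open_ball_subset {X : Type*} (hP : IsTVSCone P) {p : X → X → E}
    (hp : IsConeMetric P p) {U : Set X}
    (hU : TopologicalSpace.GenerateOpen {s | ∃ x c, c ∈ interior P ∧ s = coneBall P p x c} U) :
    ∀ a ∈ U, ∃ c ∈ interior P, coneBall P p a c ⊆ U := by
  induction hU with
  | basic s hs =>
    rintro a ha
    obtain ⟨x₀, c, hc, rfl⟩ := hs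
    refine ⟨c - p x₀ a, ha, ?_⟩
    intro y hy
    have htri : p x₀ a + p a y - p x₀ y ∈ P := hp.triangle x₀ y a
    have : (c - p x₀ a - p a y) + (p x₀ a + p a y - p x₀ y) ∈ interior P :=
      intP_add_P hP hy htri
    show c - p x₀ y ∈ interior P
    convert this using 1; abel
  | univ =>
    intro a _
    obtain ⟨c, hc⟩ := hP.int_nonempty
    exact ⟨c, hc, Set.subset_univ _⟩
  | inter U V _ _ ihU ihV =>
    rintro a ⟨haU, haV⟩
    obtain ⟨c₁, hc₁, hU⟩ := ihU a haU
    obtain ⟨c₂, hc₂, hV⟩ := ihV a haV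
    obtain ⟨t₂, ht₂, hc⟩ := small_smul hP (e := c₁) hc₂
    set t := min t₂ 1 with htdef
    have ht : 0 < t := lt_min ht₂ one_pos
    refine ⟨t • c₁, smul_intP hP ht hc₁, ?_⟩
    intro y hy
    have h1 : c₁ - p a y ∈ interior P := by
      have hdiff : c₁ - t • c₁ ∈ P := by
        have : (1 - t) • c₁ ∈ P :=
          hP.smul_mem _ (by simp [htdef]) (interior_subset hc₁)
        simpa [sub_smul] using this
      have := intP_add_P hP hy hdiff
      convert this using 1; abel
    have h2 : c₂ - p a y ∈ interior P := by
      have hdiff : c₂ - t • c₁ ∈ P := by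
        have h3 : (t₂ - t) • c₁ ∈ P :=
          hP.smul_mem _ (by simp [htdef]) (interior_subset hc₁)
        have := hP.add_mem (interior_subset hc) h3
        convert this using 1
        rw [sub_smul]; abel
      have := intP_add_P hP hy hdiff
      convert this using 1; abel
    exact ⟨hU h1, hV h2⟩
  | sUnion S _ ih =>
    rintro a ⟨U, hUS, haU⟩
    obtain ⟨c, hc, hsub⟩ := ih U hUS a haU
    exact ⟨c, hc, hsub.trans (Set.subset_sUnion_of_mem hUS)⟩

end Aux

/-- `A ⊆ X` is closed in `τ_p` iff it is sequentially closed for cone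
convergence. -/
theorem stmt_10 {E X : Type*} [AddCommGroup E] [Module ℝ E] [TopologicalSpace E]
    [IsTopologicalAddGroup E] [ContinuousSMul ℝ E] [T2Space E] [Nonempty X]
    (P : Set E) (hP : IsTVSCone P) (p : X → X → E) (hp : IsConeMetric P p) (A : Set X) :
    @IsClosed X (coneTopology P p) A ↔
      ∀ x : ℕ → X, (∀ n, x n ∈ A) → ∀ a : X, ConeConverges P p x a → a ∈ A := by
  letI τ := coneTopology P p
  constructor
  · intro hA x hx a hconv
    by_contra ha
    have hopen : TopologicalSpace.GenerateOpen
        {s | ∃ x c, c ∈ interior P ∧ s = coneBall P p x c} Aᶜ := hA.isOpen_compl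
    obtain ⟨c, hc, hsub⟩ := open_ball_subset hP hp hopen a ha
    obtain ⟨N, hN⟩ := hconv c hc
    have hball : x N ∈ coneBall P p a c := by
      show c - p a (x N) ∈ interior P
      rw [hp.symm a (x N)]
      exact hN N le_rfl
    exact hsub hball (hx N)
  · intro hseq
    rw [← isOpen_compl_iff (X := X)]
    -- Claim: every point of `Aᶜ` has a ball inside `Aᶜ`.
    have key : ∀ a ∈ Aᶜ, ∃ c ∈ interior P, coneBall P p a c ⊆ Aᶜ := by
      intro a ha
      by_contra hcon
      push_neg at hcon
      obtain ⟨e, he⟩ := hP.int_nonempty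
      have hchoice : ∀ n : ℕ, ∃ y ∈ A, ((n : ℝ) + 1)⁻¹ • e - p a y ∈ interior P := by
        intro n
        have hc : ((n : ℝ) + 1)⁻¹ • e ∈ interior P :=
          smul_intP hP (by positivity) he
        have hy := hcon _ hc
        rcases Set.not_subset.1 hy with ⟨z, hz1, hz2⟩
        exact ⟨z, by simpa using hz2, hz1⟩
      choose x hxA hxlt using hchoice
      have hconv : ConeConverges P p x a := by
        intro c hc
        obtain ⟨t, ht, hct⟩ := small_smul hP (e := e) hc
        obtain ⟨N, hNt⟩ := exists_nat_gt t⁻¹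
        refine ⟨N, fun n hn => ?_⟩
        have hinv : ((n : ℝ) + 1)⁻¹ ≤ t := by
          rw [inv_le_comm₀ (by positivity) ht]
          calc t⁻¹ ≤ N := hNt.le
            _ ≤ (n : ℝ) := by exact_mod_cast hn
            _ ≤ n + 1 := by linarith
        have h1 : (t - ((n : ℝ) + 1)⁻¹) • e ∈ P :=
          hP.smul_mem _ (by linarith) (interior_subset he)
        have h2 : c - t • e + (t - ((n : ℝ) + 1)⁻¹) • e ∈ interior P :=
          intP_add_P hP hct h1
        have h3 := intP_add_P hP h2 (interior_subset (hxlt n))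
        show c - p (x n) a ∈ interior P
        rw [hp.symm (x n) a]
        convert h3 using 1
        rw [sub_smul]; abel
      exact ha (hseq x hxA a hconv)
    choose! c hcint hcsub using key
    have : Aᶜ = ⋃ a ∈ Aᶜ, coneBall P p a (c a) := by
      apply Set.Subset.antisymm
      · intro a ha
        refine Set.mem_biUnion ha ?_
        show c a - p a a ∈ interior P
        rw [(hp.eq_zero_iff a a).2 rfl, sub_zero]
        exact hcint a ha
      · exact Set.iUnion₂_subset fun a ha => hcsub a ha
    rw [this]
    refine isOpen_biUnion fun a ha => ?_
    exact TopologicalSpace.GenerateOpen.basic _ ⟨a, c a, hcint a ha, rfl⟩
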